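/- For all x ∈ (0, π/2), 1/(π/2 − x) − 2/π < tan(x) < 1/(π/2 − x) − 2/π + (1 − 4/π²)·x. -/

import Mathlib

open Real Set

lemma sin_gt_aux {t : ℝ} (ht : 0 < t) : t - t ^ 3 / 6 < sin t := by
  have h : StrictMonoOn (fun s : ℝ => sin s - s + s ^ 3 / 6) (Ici 0) := by
    apply strictMonoOn_of_deriv_pos (convex_Ici 0)
    · fun_prop
    · intro s hs
      rw [interior_Ici] at hs
      have hd : HasDerivAt (fun s : ℝ => sin s - s + s ^ 3 / 6)
          (cos s - 1 + 3 * s ^ 2 / 6) s := by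
        have := ((Real.hasDerivAt_sin s).sub (hasDerivAt_id s)).add
          (((hasDerivAt_pow 3 s)).div_const 6)
        simpa [Pi.sub_def, Pi.add_def] using this
      rw [hd.deriv]
      have := Real.one_sub_sq_div_two_lt_cos (x := s) (ne_of_gt hs)
      nlinarith [hs]
  have := h (self_mem_Ici) (le_of_lt ht : (0:ℝ) ≤ t) ht
  simp at this
  linarith

lemma cos_lt_aux {t : ℝ} (ht : 0 < t) : cos t < 1 - t ^ 2 / 2 + t ^ 4 / 24 := by
  have h : StrictMonoOn (fun s : ℝ => 1 - s ^ 2 / 2 + s ^ 4 / 24 - cos s) (Ici 0) := by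
    apply strictMonoOn_of_deriv_pos (convex_Ici 0)
    · fun_prop
    · intro s hs
      rw [interior_Ici] at hs
      have hd : HasDerivAt (fun s : ℝ => 1 - s ^ 2 / 2 + s ^ 4 / 24 - cos s)
          (0 - 2 * s / 2 + 4 * s ^ 3 / 24 - -sin s) s := by
        have := (((hasDerivAt_const s (1:ℝ)).sub ((hasDerivAt_pow 2 s).div_const 2)).add
          ((hasDerivAt_pow 4 s).div_const 24)).sub (Real.hasDerivAt_cos s)
        simpa [Pi.sub_def, Pi.add_def] using this
      rw [hd.deriv]
      have := sin_gt_aux hs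
      nlinarith
  have := h (self_mem_Ici) (le_of_lt ht : (0:ℝ) ≤ t) ht
  simp at this
  linarith

lemma cube_aux {t : ℝ} (ht : 0 < t) (ht2 : t < π / 2) : t ^ 3 * cos t < sin t ^ 3 := by
  have hp : t < 1.6 := lt_of_lt_of_le ht2 (by nlinarith [Real.pi_lt_d2])
  have h1 : t - t ^ 3 / 6 < sin t := sin_gt_aux ht
  have h2 : cos t < 1 - t ^ 2 / 2 + t ^ 4 / 24 := cos_lt_aux ht
  have h3 : 0 < t - t ^ 3 / 6 := by nlinarith
  have h4 : t ^ 3 * (1 - t ^ 2 / 2 + t ^ 4 / 24) ≤ (t - t ^ 3 / 6) ^ 3 := by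
    have h9 : t ^ 2 < 9 := by nlinarith
    nlinarith [mul_nonneg (pow_nonneg ht.le 7) (by linarith : (0:ℝ) ≤ 9 - t ^ 2)]
  have h5 : (t - t ^ 3 / 6) ^ 3 < sin t ^ 3 :=
    pow_lt_pow_left₀ h1 h3.le (by norm_num : (3:ℕ) ≠ 0)
  have h6 : t ^ 3 * cos t < t ^ 3 * (1 - t ^ 2 / 2 + t ^ 4 / 24) :=
    (mul_lt_mul_iff_right₀ (by positivity)).2 h2
  linarith

lemma key_aux {t : ℝ} (ht : 0 < t) (ht2 : t < π / 2) :
    1 / sin t ^ 2 < 1 / t ^ 2 + 1 - 4 / π ^ 2 := by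
  have hpi := Real.pi_pos
  have hmono : StrictMonoOn (fun s : ℝ => (sin s ^ 2)⁻¹ - (s ^ 2)⁻¹) (Ioc 0 (π / 2)) := by
    apply strictMonoOn_of_deriv_pos (convex_Ioc 0 (π / 2))
    · apply ContinuousOn.sub
      · apply ContinuousOn.inv₀ (by fun_prop)
        intro s hs
        have : 0 < sin s := sin_pos_of_pos_of_lt_pi hs.1 (by linarith [hs.2])
        positivity
      · apply ContinuousOn.inv₀ (by fun_prop)
        intro s hs
        have := hs.1; positivity
    · intro s hs
      rw [interior_Ioc] at hs
      obtain ⟨hs1, hs2⟩ := hs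
      have hsin : 0 < sin s := sin_pos_of_pos_of_lt_pi hs1 (by linarith)
      have hd : HasDerivAt (fun s : ℝ => (sin s ^ 2)⁻¹ - (s ^ 2)⁻¹)
          (-(2 * sin s ^ 1 * cos s) / (sin s ^ 2) ^ 2 - -(2 * s ^ 1) / (s ^ 2) ^ 2) s := by
        exact (((Real.hasDerivAt_sin s).pow 2).inv (pow_ne_zero 2 hsin.ne')).sub
          ((hasDerivAt_pow 2 s).inv (pow_ne_zero 2 hs1.ne'))
      rw [hd.deriv]
      have heq : -(2 * sin s ^ 1 * cos s) / (sin s ^ 2) ^ 2 - -(2 * s ^ 1) / (s ^ 2) ^ 2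
          = 2 * (sin s ^ 3 - s ^ 3 * cos s) / (s ^ 3 * sin s ^ 3) := by
        field_simp
        ring
      rw [heq]
      have := cube_aux hs1 hs2
      apply div_pos (by linarith) (by positivity)
  have h := hmono ⟨ht, ht2.le⟩ ⟨by linarith, le_refl _⟩ ht2
  simp only [Real.sin_pi_div_two] at h
  have h2 : ((π / 2) ^ 2 : ℝ)⁻¹ = 4 / π ^ 2 := by
    field_simp; ring
  rw [h2] at h
  simp only [one_pow, inv_one] at h
  have e1 : 1 / sin t ^ 2 = (sin t ^ 2)⁻¹ := one_div _
  have e2 : (1 : ℝ) / t ^ 2 = (t ^ 2)⁻¹ := one_div _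
  rw [e1, e2]
  linarith

theorem tan_rational_bounds_1 (x : ℝ) (hx : x ∈ Set.Ioo 0 (π / 2)) :
    1 / (π / 2 - x) - 2 / π < tan x ∧
    tan x < 1 / (π / 2 - x) - 2 / π + (1 - 4 / π ^ 2) * x := by
  have hpi := Real.pi_pos
  obtain ⟨hx1, hx2⟩ := hx
  have hcosne : ∀ y ∈ Ico (0:ℝ) (π / 2), cos y ≠ 0 := fun y hy =>
    ne_of_gt (Real.cos_pos_of_mem_Ioo ⟨by linarith [hy.1], hy.2⟩)
  have hsubne : ∀ y ∈ Ico (0:ℝ) (π / 2), π / 2 - y ≠ 0 := fun y hy =>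
    ne_of_gt (by linarith [hy.2])
  have hct : ContinuousOn tan (Ico (0:ℝ) (π / 2)) :=
    Real.continuousOn_tan.mono fun y hy => hcosne y hy
  have hci : ContinuousOn (fun y : ℝ => (π / 2 - y)⁻¹) (Ico (0:ℝ) (π / 2)) :=
    ContinuousOn.inv₀ (by fun_prop) hsubne
  constructor
  · -- lower bound
    have hmono : StrictMonoOn (fun y : ℝ => tan y - (π / 2 - y)⁻¹) (Ico 0 (π / 2)) := by
      apply strictMonoOn_of_deriv_pos (convex_Ico 0 (π / 2)) (hct.sub hci)
      intro y hy
      rw [interior_Ico] at hy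
      obtain ⟨hy1, hy2⟩ := hy
      have hcos : 0 < cos y := Real.cos_pos_of_mem_Ioo ⟨by linarith, hy2⟩
      have hsub : 0 < π / 2 - y := by linarith
      have hd : HasDerivAt (fun y : ℝ => tan y - (π / 2 - y)⁻¹)
          (1 / cos y ^ 2 - -(0 - 1) / (π / 2 - y) ^ 2) y := by
        exact (Real.hasDerivAt_tan hcos.ne').sub
          (((hasDerivAt_const y (π / 2)).sub (hasDerivAt_id y)).inv hsub.ne')
      rw [show (tan - fun y : ℝ => (π / 2 - y)⁻¹) = (fun y : ℝ => tan y - (π / 2 - y)⁻¹) from rfl, hd.deriv]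
      have hlt : cos y < π / 2 - y := by
        have := Real.sin_lt hsub
        rwa [Real.sin_pi_div_two_sub] at this
      have hsq : cos y ^ 2 < (π / 2 - y) ^ 2 := by nlinarith
      have := one_div_lt_one_div_of_lt (by positivity) hsq
      have hne : -(0 - 1 : ℝ) / (π / 2 - y) ^ 2 = 1 / (π / 2 - y) ^ 2 := by ring
      rw [hne]
      linarith
    have h := hmono ⟨le_refl 0, by linarith⟩ ⟨hx1.le, hx2⟩ hx1
    simp only [Real.tan_zero, sub_zero, zero_sub] at h
    have : ((π / 2 : ℝ))⁻¹ = 2 / π := by field_simp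
    rw [this] at h
    rw [one_div]
    linarith
  · -- upper bound
    have hmono : StrictMonoOn
        (fun y : ℝ => (π / 2 - y)⁻¹ + (1 - 4 / π ^ 2) * y - tan y) (Ico 0 (π / 2)) := by
      apply strictMonoOn_of_deriv_pos (convex_Ico 0 (π / 2))
      · exact (hci.add (by fun_prop)).sub hct
      intro y hy
      rw [interior_Ico] at hy
      obtain ⟨hy1, hy2⟩ := hy
      have hcos : 0 < cos y := Real.cos_pos_of_mem_Ioo ⟨by linarith, hy2⟩
      have hsub : 0 < π / 2 - y := by linarith
      have hd : HasDerivAt (fun y : ℝ => (π / 2 - y)⁻¹ + (1 - 4 / π ^ 2) * y - tan y)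
          (-(0 - 1) / (π / 2 - y) ^ 2 + (1 - 4 / π ^ 2) * 1 - 1 / cos y ^ 2) y := by
        exact ((((hasDerivAt_const y (π / 2)).sub (hasDerivAt_id y)).inv hsub.ne').add
          ((hasDerivAt_id y).const_mul (1 - 4 / π ^ 2))).sub (Real.hasDerivAt_tan hcos.ne')
      rw [hd.deriv]
      have hk := key_aux hsub (by linarith)
      rw [Real.sin_pi_div_two_sub] at hk
      have hne : -(0 - 1 : ℝ) / (π / 2 - y) ^ 2 = 1 / (π / 2 - y) ^ 2 := by ring
      rw [hne]
      linarith
    have h := hmono ⟨le_refl 0, by linarith⟩ ⟨hx1.le, hx2⟩ hx1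
    simp only [Real.tan_zero, sub_zero, mul_zero, add_zero] at h
    have : ((π / 2 : ℝ))⁻¹ = 2 / π := by field_simp
    rw [this] at h
    rw [one_div]
    linarith
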